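/- There is an absolute constant c > 0 such that for every positive integer d and every δ ∈ (0, 1/10), there exists r ≤ (1/2)√d such that the region S(r) = {x ∈ [0, 1/2]^d : r − δ ≤ ‖x‖₂ ≤ r} has Lebesgue volume at least c·δ·2^{−d}. -/

import Mathlib

open MeasureTheory Real
open intervalIntegral

namespace Stmt6Aux

lemma hI0 : ∫ t in Set.Icc (0:ℝ) (1/2), (1:ℝ) = 1/2 := by
  rw [MeasureTheory.integral_Icc_eq_integral_Ioc,
    ← integral_of_le (by norm_num : (0:ℝ) ≤ 1/2)]
  simp

lemma hI1 : ∫ t in Set.Icc (0:ℝ) (1/2), (t^2 - 1/12) = 0 := by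
  rw [MeasureTheory.integral_Icc_eq_integral_Ioc,
    ← integral_of_le (by norm_num : (0:ℝ) ≤ 1/2)]
  rw [integral_sub (intervalIntegrable_pow 2)
    (intervalIntegrable_const)]
  rw [integral_pow]
  simp
  norm_num

lemma hI2 : ∫ t in Set.Icc (0:ℝ) (1/2), (t^2 - 1/12)^2 = 1/360 := by
  have h : ∀ t : ℝ, (t^2 - 1/12)^2 = t^4 - (1/6)*t^2 + 1/144 := fun t => by ring
  simp_rw [h]
  rw [MeasureTheory.integral_Icc_eq_integral_Ioc,
    ← integral_of_le (by norm_num : (0:ℝ) ≤ 1/2)]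
  rw [integral_add
      ((intervalIntegrable_pow 4).sub
        ((intervalIntegrable_pow 2).const_mul _))
      intervalIntegrable_const,
    integral_sub (intervalIntegrable_pow 4)
      ((intervalIntegrable_pow 2).const_mul _),
    intervalIntegral.integral_const_mul,
    integral_pow, integral_pow]
  simp
  norm_num

lemma ind_int {h : ℝ → ℝ} (hc : Continuous h) :
    Integrable ((Set.Icc (0:ℝ) (1/2)).indicator h) volume :=
  (integrable_indicator_iff measurableSet_Icc).mpr (hc.integrableOn_Icc)

end Stmt6Aux

namespace Stmt6Aux

lemma variance_calc (d : ℕ) (hd : 1 ≤ d) :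
    ∫ x : Fin d → ℝ, (Set.pi Set.univ (fun _ : Fin d => Set.Icc (0:ℝ) (1/2))).indicator
      (fun x => (∑ i, ((x i)^2 - 1/12))^2) x = (1/2)^d * ((d : ℝ) / 180) := by
  classical
  set g : ℝ → ℝ := fun t => t^2 - 1/12 with hg
  set F : Fin d → Fin d → Fin d → ℝ → ℝ := fun i j k =>
    (Set.Icc (0:ℝ) (1/2)).indicator
      (fun t => (if k = i then g t else (1:ℝ)) * (if k = j then g t else (1:ℝ))) with hF
  have hFcont : ∀ i j k : Fin d, Continuous (fun t : ℝ => (if k = i then g t else 1) * (if k = j then g t else 1)) := by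
    intro i j k
    split_ifs <;> simp [hg] <;> fun_prop
  have hFint : ∀ i j k, Integrable (F i j k) volume := fun i j k => ind_int (hFcont i j k)
  have hP : ∀ i j, Integrable (fun x : Fin d → ℝ => ∏ k, F i j k (x k)) volume :=
    fun i j => Integrable.fintype_prod (fun k => hFint i j k)
  have hpt : ∀ x : Fin d → ℝ,
      (Set.pi Set.univ (fun _ : Fin d => Set.Icc (0:ℝ) (1/2))).indicator
        (fun x => (∑ i, ((x i)^2 - 1/12))^2) x = ∑ i, ∑ j, ∏ k, F i j k (x k) := by
    intro x
    by_cases hx : x ∈ Set.pi Set.univ (fun _ : Fin d => Set.Icc (0:ℝ) (1/2))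
    · rw [Set.indicator_of_mem hx]
      have hx' : ∀ k, x k ∈ Set.Icc (0:ℝ) (1/2) := fun k => hx k (Set.mem_univ k)
      have hPij : ∀ i j, (∏ k, F i j k (x k)) = g (x i) * g (x j) := by
        intro i j
        have : ∀ k, F i j k (x k) =
            (if k = i then g (x k) else 1) * (if k = j then g (x k) else 1) := by
          intro k; rw [hF]; exact Set.indicator_of_mem (hx' k) _
        rw [Finset.prod_congr rfl (fun k _ => this k), Finset.prod_mul_distrib,
          Finset.prod_ite_eq' Finset.univ i (fun k => g (x k)),
          Finset.prod_ite_eq' Finset.univ j (fun k => g (x k))]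
        simp
      simp_rw [hPij]
      rw [← Finset.sum_mul_sum]
      simp [hg, sq]
    · rw [Set.indicator_of_notMem hx]
      obtain ⟨k₀, hk₀⟩ := not_forall.mp (fun h => hx (Set.mem_univ_pi.mpr h))
      have : ∀ i j, (∏ k, F i j k (x k)) = 0 := by
        intro i j
        apply Finset.prod_eq_zero (Finset.mem_univ k₀)
        rw [hF]; exact Set.indicator_of_notMem hk₀ _
      simp [this]
  rw [integral_congr_ae (Filter.Eventually.of_forall hpt)]
  rw [integral_finset_sum _ (fun i _ => integrable_finset_sum _ (fun j _ => hP i j))]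
  have : ∀ i, ∫ x : Fin d → ℝ, ∑ j, ∏ k, F i j k (x k) =
      ∑ j, ∫ x : Fin d → ℝ, ∏ k, F i j k (x k) := fun i =>
    integral_finset_sum _ (fun j _ => hP i j)
  simp_rw [this]
  have hFval : ∀ i j k : Fin d, ∫ t, F i j k t =
      if k = i ∧ k = j then (1/360 : ℝ) else if k = i ∨ k = j then 0 else 1/2 := by
    intro i j k
    simp only [hF]
    rw [MeasureTheory.integral_indicator measurableSet_Icc]
    by_cases h1 : k = i <;> by_cases h2 : k = j
    · rw [if_pos ⟨h1, h2⟩]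
      simp only [if_pos h1, if_pos h2]
      have hgg : ∀ t : ℝ, g t * g t = (t^2 - 1/12)^2 := fun t => by rw [hg]; ring
      simp_rw [hgg]
      exact hI2
    · rw [if_neg (fun h => h2 h.2), if_pos (Or.inl h1)]
      simp only [if_pos h1, if_neg h2, mul_one]
      rw [hg]
      exact hI1
    · rw [if_neg (fun h => h1 h.1), if_pos (Or.inr h2)]
      simp only [if_neg h1, if_pos h2, one_mul]
      rw [hg]
      exact hI1
    · rw [if_neg (fun h => h1 h.1), if_neg (by simp [h1, h2])]
      simp only [if_neg h1, if_neg h2, mul_one]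
      exact hI0
  have hprod : ∀ i j, (∏ k, ∫ t, F i j k t) = if i = j then (1/360) * (1/2)^(d-1) else 0 := by
    intro i j
    by_cases hij : i = j
    · subst hij
      rw [if_pos rfl]
      have : ∀ k, ∫ t, F i i k t = if k = i then (1/360 : ℝ) else 1/2 := by
        intro k; rw [hFval]; by_cases h : k = i <;> simp [h]
      rw [Finset.prod_congr rfl (fun k _ => this k)]
      rw [← Finset.mul_prod_erase Finset.univ _ (Finset.mem_univ i), if_pos rfl]
      have : ∀ k ∈ Finset.univ.erase i, (if k = i then (1/360 : ℝ) else 1/2) = 1/2 := by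
        intro k hk; rw [if_neg (Finset.ne_of_mem_erase hk)]
      rw [Finset.prod_congr rfl this, Finset.prod_const,
        Finset.card_erase_of_mem (Finset.mem_univ i)]
      simp
    · rw [if_neg hij]
      apply Finset.prod_eq_zero (Finset.mem_univ i)
      rw [hFval, if_neg (by simp [hij]), if_pos (Or.inl rfl)]
  have hintP : ∀ i j, ∫ x : Fin d → ℝ, ∏ k, F i j k (x k) =
      if i = j then (1/360 : ℝ) * (1/2)^(d-1) else 0 := by
    intro i j
    rw [MeasureTheory.integral_fintype_prod_volume_eq_prod (fun k => F i j k)]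
    exact hprod i j
  simp_rw [hintP]
  rw [Finset.sum_congr rfl (fun i _ => Finset.sum_ite_eq Finset.univ i
    (fun _ => (1/360 : ℝ) * (1/2)^(d-1)))]
  simp only [Finset.mem_univ, if_true, Finset.sum_const, Finset.card_univ, Fintype.card_fin,
    nsmul_eq_mul]
  obtain ⟨e, rfl⟩ : ∃ e, d = e + 1 := ⟨d - 1, (Nat.succ_pred_eq_of_pos hd).symm⟩
  rw [Nat.add_sub_cancel]
  push_cast
  ring

end Stmt6Aux

namespace Stmt6Aux

lemma lemA (d : ℕ) (hd : 1 ≤ d) : ∃ b : ℝ, 0 ≤ b ∧ b ≤ Real.sqrt d / 2 ∧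
    ENNReal.ofReal ((1/2)^d / 2) ≤
      volume {x : Fin d → ℝ | (∀ i, x i ∈ Set.Icc (0:ℝ) (1/2)) ∧
        b - 2 ≤ Real.sqrt (∑ i, x i ^ 2) ∧ Real.sqrt (∑ i, x i ^ 2) ≤ b} := by
  have hd1 : (1:ℝ) ≤ d := by exact_mod_cast hd
  set u : ℝ := Real.sqrt (d/90) with hu_def
  have hu0 : 0 ≤ u := Real.sqrt_nonneg _
  have hu : u^2 = (d:ℝ)/90 := Real.sq_sqrt (by positivity)
  set b : ℝ := Real.sqrt ((d:ℝ)/12 + u) with hb_def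
  have hb0 : 0 ≤ b := Real.sqrt_nonneg _
  have hb2 : b^2 = (d:ℝ)/12 + u := Real.sq_sqrt (by positivity)
  clear_value u b
  refine ⟨b, hb0, ?_, ?_⟩
  · -- b ≤ √d / 2
    have h1 : u ≤ (d:ℝ)/6 := by nlinarith
    have h2 : (d:ℝ)/12 + u ≤ (d:ℝ)/4 := by linarith
    have h3 : b ≤ Real.sqrt ((d:ℝ)/4) := by
      rw [hb_def]; exact Real.sqrt_le_sqrt h2
    have h4 : Real.sqrt ((d:ℝ)/4) = Real.sqrt d / 2 := by
      rw [Real.sqrt_div (by positivity) 4]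
      norm_num [show Real.sqrt 4 = 2 by
        rw [show (4:ℝ) = 2^2 by norm_num, Real.sqrt_sq (by norm_num : (0:ℝ) ≤ 2)]]
    linarith
  -- the measure bound
  set cube : Set (Fin d → ℝ) := Set.pi Set.univ (fun _ : Fin d => Set.Icc (0:ℝ) (1/2)) with hcube
  have hcube_meas : MeasurableSet cube :=
    MeasurableSet.pi (Set.to_countable _) (fun _ _ => measurableSet_Icc)
  set f : (Fin d → ℝ) → ℝ := fun x => (∑ i, ((x i)^2 - 1/12))^2 with hf
  have hf_cont : Continuous f := by
    apply Continuous.pow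
    exact continuous_finset_sum _ fun i _ => ((continuous_apply i).pow 2).sub continuous_const
  set μ : Measure (Fin d → ℝ) := volume.restrict cube with hμ
  have hcube_vol : volume cube = ENNReal.ofReal ((1/2)^d) := by
    rw [hcube, volume_pi_pi]
    simp [Real.volume_Icc]
    exact ENNReal.inv_pow.symm
  have hμfin : IsFiniteMeasure μ := by
    constructor
    rw [hμ, Measure.restrict_apply_univ, hcube_vol]
    exact ENNReal.ofReal_lt_top
  have hcube_cpt : IsCompact cube := isCompact_univ_pi fun _ => isCompact_Icc
  have hf_int : Integrable f μ := by
    rw [hμ]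
    exact hf_cont.continuousOn.integrableOn_compact hcube_cpt
  have hf_integral : ∫ x, f x ∂μ = (1/2)^d * ((d:ℝ)/180) := by
    rw [hμ, ← MeasureTheory.integral_indicator hcube_meas]
    exact variance_calc d hd
  set bad : Set (Fin d → ℝ) := {x | (d:ℝ)/90 ≤ f x} with hbad
  have hbad_meas : MeasurableSet bad := (isClosed_le continuous_const hf_cont).measurableSet
  have hmark := mul_meas_ge_le_integral_of_nonneg (μ := μ) (f := f)
      (Filter.Eventually.of_forall (fun x => sq_nonneg _)) hf_int ((d:ℝ)/90)
  have hd90 : (0:ℝ) < (d:ℝ)/90 := by positivity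
  have hbadtop : μ bad ≠ ⊤ := measure_ne_top μ _
  have hbadle : μ bad ≤ ENNReal.ofReal ((1/2)^d / 2) := by
    rw [← ENNReal.ofReal_toReal hbadtop]
    apply ENNReal.ofReal_le_ofReal
    rw [hf_integral] at hmark
    have h2 : (d:ℝ)/90 * (μ bad).toReal ≤ (d:ℝ)/90 * ((1/2)^d/2) := by
      calc (d:ℝ)/90 * (μ bad).toReal ≤ (1/2)^d * ((d:ℝ)/180) := hmark
      _ = (d:ℝ)/90 * ((1/2)^d/2) := by ring
    exact le_of_mul_le_mul_left h2 hd90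
  have hcompl : ENNReal.ofReal ((1/2)^d/2) ≤ μ badᶜ := by
    rw [measure_compl hbad_meas hbadtop]
    have huniv : μ Set.univ = ENNReal.ofReal ((1/2)^d) := by
      rw [hμ, Measure.restrict_apply_univ, hcube_vol]
    rw [huniv]
    refine le_trans ?_ (tsub_le_tsub_left hbadle (ENNReal.ofReal ((1/2)^d)))
    rw [← ENNReal.ofReal_sub _ (by positivity)]
    exact ENNReal.ofReal_le_ofReal (le_of_eq (by ring))
  have hsub : badᶜ ∩ cube ⊆ {x : Fin d → ℝ | (∀ i, x i ∈ Set.Icc (0:ℝ) (1/2)) ∧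
      b - 2 ≤ Real.sqrt (∑ i, x i ^ 2) ∧ Real.sqrt (∑ i, x i ^ 2) ≤ b} := by
    rintro x ⟨hxg, hxc⟩
    have hxi : ∀ i, x i ∈ Set.Icc (0:ℝ) (1/2) := fun i => hxc i (Set.mem_univ i)
    simp only [hbad, Set.mem_compl_iff, Set.mem_setOf_eq, not_le] at hxg
    simp only [hf] at hxg
    clear hmark hbadle hcompl hbadtop hbad_meas hf_int hf_integral hμfin hcube_vol hf_cont hcube_meas hcube_cpt hxc
    clear hbad hμ hf hcube bad μ f cube
    simp only [Set.mem_setOf_eq]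
    set S : ℝ := ∑ i, x i ^ 2 with hS
    have hS0 : 0 ≤ S := by rw [hS]; exact Finset.sum_nonneg fun i _ => sq_nonneg _
    clear_value S
    have hsum : (∑ i, ((x i)^2 - 1/12)) = S - (d:ℝ)/12 := by
      rw [Finset.sum_sub_distrib, Finset.sum_const, Finset.card_univ, Fintype.card_fin, hS]
      push_cast
      ring
    rw [hsum] at hxg
    have hfx' : (S - (d:ℝ)/12)^2 < u^2 := by rw [hu]; exact hxg
    have hS1 : S < (d:ℝ)/12 + u := by nlinarith [hfx', hu0]
    have hS2 : (d:ℝ)/12 - u < S := by nlinarith [hfx', hu0]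
    refine ⟨hxi, ?_, ?_⟩
    · rcases le_or_gt b 2 with hble | hbgt
      · have h0 : (0:ℝ) ≤ Real.sqrt S := Real.sqrt_nonneg _
        linarith
      · have key : 2 + u ≤ 2*b := by
          rcases le_or_gt u 2 with h | h
          · linarith
          · have h2b : (2+u)^2 ≤ (2*b)^2 := by nlinarith
            nlinarith [sq_nonneg (2 + u - 2*b)]
        have hbS : (b-2)^2 ≤ S := by nlinarith
        calc b - 2 = Real.sqrt ((b-2)^2) := (Real.sqrt_sq (by linarith)).symm
        _ ≤ Real.sqrt S := Real.sqrt_le_sqrt hbS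
    · rw [hb_def]
      exact Real.sqrt_le_sqrt (le_of_lt hS1)
  calc ENNReal.ofReal ((1/2)^d/2) ≤ μ badᶜ := hcompl
  _ = volume (badᶜ ∩ cube) := by rw [hμ, Measure.restrict_apply hbad_meas.compl]
  _ ≤ _ := measure_mono hsub

end Stmt6Aux

theorem stmt_6 :
    ∃ c > (0 : ℝ), ∀ d : ℕ, 1 ≤ d → ∀ δ : ℝ, δ ∈ Set.Ioo (0 : ℝ) (1 / 10) →
      ∃ r ≤ Real.sqrt d / 2,
        volume {x : Fin d → ℝ | (∀ i, x i ∈ Set.Icc (0 : ℝ) (1 / 2)) ∧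
          r - δ ≤ Real.sqrt (∑ i, x i ^ 2) ∧ Real.sqrt (∑ i, x i ^ 2) ≤ r} ≥
        ENNReal.ofReal (c * δ * (1 / 2) ^ d) := by
  refine ⟨1/7, by norm_num, ?_⟩
  intro d hd δ hδ
  obtain ⟨hδ0, hδ10⟩ := hδ
  obtain ⟨b, hb0, hbd, hvol⟩ := Stmt6Aux.lemA d hd
  by_contra hcon
  push_neg at hcon
  set N : ℕ := ⌊2/δ⌋₊ + 1 with hN
  have hNδ : 2 < (N:ℝ) * δ := by
    have h1 : 2/δ < (N:ℝ) := by
      rw [hN]; push_cast; exact Nat.lt_floor_add_one _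
    calc (2:ℝ) = (2/δ)*δ := by field_simp
    _ < N*δ := mul_lt_mul_of_pos_right h1 hδ0
  have hNle : (N:ℝ) ≤ 3/δ := by
    have h1 : (⌊2/δ⌋₊ : ℝ) ≤ 2/δ := Nat.floor_le (by positivity)
    have h2 : (1:ℝ) ≤ 1/δ := by
      rw [le_div_iff₀ hδ0]; linarith
    have h3 : (2:ℝ)/δ + 1/δ = 3/δ := by ring
    rw [hN]; push_cast; linarith
  set T : ℕ → Set (Fin d → ℝ) := fun k =>
    {x : Fin d → ℝ | (∀ i, x i ∈ Set.Icc (0:ℝ) (1/2)) ∧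
      (b - k*δ) - δ ≤ Real.sqrt (∑ i, x i ^ 2) ∧ Real.sqrt (∑ i, x i ^ 2) ≤ b - k*δ} with hT
  have hcover : {x : Fin d → ℝ | (∀ i, x i ∈ Set.Icc (0:ℝ) (1/2)) ∧
      b - 2 ≤ Real.sqrt (∑ i, x i ^ 2) ∧ Real.sqrt (∑ i, x i ^ 2) ≤ b} ⊆
      ⋃ k ∈ Finset.range N, T k := by
    rintro x ⟨h1, h2, h3⟩
    set s : ℝ := Real.sqrt (∑ i, x i ^ 2) with hs
    have hy0 : 0 ≤ b - s := by linarith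
    have hy2 : b - s ≤ 2 := by linarith
    set k : ℕ := ⌊(b - s)/δ⌋₊ with hk
    have hkN : k < N := by
      rw [hN, hk]
      have h : (b-s)/δ ≤ 2/δ := by gcongr
      exact Nat.lt_succ_of_le (Nat.floor_le_floor h)
    have hkle : (k:ℝ)*δ ≤ b - s := by
      have : (k:ℝ) ≤ (b-s)/δ := Nat.floor_le (by positivity)
      calc (k:ℝ)*δ ≤ ((b-s)/δ)*δ := mul_le_mul_of_nonneg_right this (le_of_lt hδ0)
      _ = b - s := by field_simp
    have hklt : b - s < ((k:ℝ)+1)*δ := by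
      have : (b-s)/δ < (k:ℝ)+1 := Nat.lt_floor_add_one _
      calc b - s = ((b-s)/δ)*δ := by field_simp
      _ < ((k:ℝ)+1)*δ := mul_lt_mul_of_pos_right this hδ0
    refine Set.mem_biUnion (Finset.mem_range.mpr hkN) ?_
    rw [hT]
    exact ⟨h1, by linarith, by linarith⟩
  have hsum : ENNReal.ofReal ((1/2)^d/2) ≤ ∑ k ∈ Finset.range N, volume (T k) :=
    le_trans hvol (le_trans (measure_mono hcover) (measure_biUnion_finset_le _ _))
  have hbound : ∀ k ∈ Finset.range N, volume (T k) ≤ ENNReal.ofReal (1/7 * δ * (1/2)^d) := by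
    intro k _
    refine le_of_lt (hcon (b - k*δ) ?_)
    have : (0:ℝ) ≤ k*δ := by positivity
    linarith
  have htot : ∑ k ∈ Finset.range N, volume (T k) ≤
      N • ENNReal.ofReal (1/7 * δ * (1/2)^d) := by
    have := Finset.sum_le_card_nsmul (Finset.range N) (fun k => volume (T k)) _ hbound
    simpa using this
  rw [nsmul_eq_mul, ← ENNReal.ofReal_natCast N,
    ← ENNReal.ofReal_mul (Nat.cast_nonneg N)] at htot
  have hfin := le_trans hsum htot
  rw [ENNReal.ofReal_le_ofReal_iff (by positivity)] at hfin
  have hp : (0:ℝ) < (1/2)^d := by positivity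
  have hNδ3 : (N:ℝ)*δ ≤ 3 := by
    rw [← le_div_iff₀ hδ0]; exact hNle
  nlinarith [hfin, hp, hNδ3]
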